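/- The sums S₁(n) = ∑_{k=0}^n C(n,k)·C(-n-1,k)·((1-x)/2)^k (with C(-n-1,k) = (-n-1)(-n-2)···(-n-k)/k!) and S₂(n) = 2^{-n} ∑_{k=0}^n C(n,k)² (x-1)^{n-k}(x+1)^k both satisfy the same recurrence (n+1) S(n) - (2n+3) x S(n+1) + (n+2) S(n+2) = 0 and agree for n = 0 and n = 1; hence S₁(n) = S₂(n) for all n. -/

import Mathlib

open Nat

noncomputable def T (a : ℝ) (n : ℕ) : ℝ :=
  ∑ k ∈ Finset.range (n+1), (n.choose k : ℝ) * ((n+k).choose k : ℝ) * a^k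

lemma key (a : ℝ) (n k : ℕ) :
    ((n:ℝ)+1)*((n:ℝ)+2)*(((n:ℝ)+1)*(n.choose k : ℝ)*((n+k).choose k : ℝ)*a^k
      - (2*(n:ℝ)+3)*(2*a+1)*((n+1).choose k : ℝ)*((n+1+k).choose k : ℝ)*a^k
      + ((n:ℝ)+2)*((n+2).choose k : ℝ)*((n+2+k).choose k : ℝ)*a^k)
    = (4*(n:ℝ)+6)*(((k:ℕ):ℝ)^2*((n+2).choose k : ℝ)*((n+k).choose k : ℝ)*a^k
      - (((k+1:ℕ)):ℝ)^2*((n+2).choose (k+1) : ℝ)*((n+(k+1)).choose (k+1) : ℝ)*a^(k+1)) := by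
  rcases le_or_gt k n with h | h
  · obtain ⟨m, rfl⟩ : ∃ m, n = k + m := ⟨n - k, by omega⟩
    rw [show k+m+1+k = k+m+k+1 from by omega, show k+m+2+k = k+m+k+2 from by omega,
        show k+m+(k+1) = k+m+k+1 from by omega]
    have fK : ((k ! : ℝ)) ≠ 0 := by positivity
    have fM : ((m ! : ℝ)) ≠ 0 := by positivity
    have fP : (((k+m)! : ℝ)) ≠ 0 := by positivity
    have fQ : (((k+m+k)! : ℝ)) ≠ 0 := by positivity
    rw [Nat.cast_choose ℝ (show k ≤ k+m by omega),
        Nat.cast_choose ℝ (show k ≤ k+m+1 by omega),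
        Nat.cast_choose ℝ (show k ≤ k+m+2 by omega),
        Nat.cast_choose ℝ (show k+1 ≤ k+m+2 by omega),
        Nat.cast_choose ℝ (show k ≤ k+m+k by omega),
        Nat.cast_choose ℝ (show k ≤ k+m+k+1 by omega),
        Nat.cast_choose ℝ (show k ≤ k+m+k+2 by omega),
        Nat.cast_choose ℝ (show k+1 ≤ k+m+k+1 by omega)]
    simp only [show k+m-k = m from by omega, show k+m+1-k = m+1 from by omega,
      show k+m+2-k = m+2 from by omega, show k+m+2-(k+1) = m+1 from by omega,
      show k+m+k-k = k+m from by omega, show k+m+k+1-k = k+m+1 from by omega,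
      show k+m+k+2-k = k+m+2 from by omega, show k+m+k+1-(k+1) = k+m from by omega,
      Nat.factorial_succ]
    push_cast
    field_simp
    ring
  · rcases (by omega : k = n+1 ∨ k = n+2 ∨ n+2 < k) with rfl | rfl | h3
    · have fN : ((n ! : ℝ)) ≠ 0 := by positivity
      have fQ : (((n+n)! : ℝ)) ≠ 0 := by positivity
      rw [show n+(n+1) = n+n+1 from by omega, show n+1+(n+1) = n+n+2 from by omega,
          show n+2+(n+1) = n+n+3 from by omega, show n+(n+2) = n+n+2 from by omega]
      rw [Nat.choose_eq_zero_of_lt (by omega : n < n+1),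
          Nat.choose_self,
          Nat.cast_choose ℝ (show n+1 ≤ n+n+1 by omega),
          Nat.cast_choose ℝ (show n+1 ≤ n+n+2 by omega),
          Nat.cast_choose ℝ (show n+1 ≤ n+2 by omega),
          Nat.cast_choose ℝ (show n+1 ≤ n+n+3 by omega),
          Nat.cast_choose ℝ (show n+2 ≤ n+n+2 by omega),
          Nat.choose_self]
      simp only [show n+n+1-(n+1) = n from by omega, show n+n+2-(n+1) = n+1 from by omega,
        show n+2-(n+1) = 1 from by omega, show n+n+3-(n+1) = n+2 from by omega,
        show n+n+2-(n+2) = n from by omega, Nat.factorial_succ, Nat.factorial_one,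
        Nat.factorial_zero]
      push_cast
      field_simp
      ring
    · have fN : ((n ! : ℝ)) ≠ 0 := by positivity
      have fQ : (((n+n)! : ℝ)) ≠ 0 := by positivity
      rw [show n+(n+2) = n+n+2 from by omega, show n+1+(n+2) = n+n+3 from by omega,
          show n+2+(n+2) = n+n+4 from by omega, show n+(n+3) = n+n+3 from by omega]
      rw [Nat.choose_eq_zero_of_lt (by omega : n < n+2),
          Nat.choose_eq_zero_of_lt (by omega : n+1 < n+2),
          Nat.choose_self,
          Nat.choose_eq_zero_of_lt (by omega : n+2 < n+3),
          Nat.cast_choose ℝ (show n+2 ≤ n+n+2 by omega),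
          Nat.cast_choose ℝ (show n+2 ≤ n+n+3 by omega),
          Nat.cast_choose ℝ (show n+2 ≤ n+n+4 by omega)]
      simp only [show n+n+2-(n+2) = n from by omega, show n+n+3-(n+2) = n+1 from by omega,
        show n+n+4-(n+2) = n+2 from by omega, Nat.factorial_succ]
      push_cast
      field_simp
      ring
    · rw [Nat.choose_eq_zero_of_lt (by omega : n < k),
          Nat.choose_eq_zero_of_lt (by omega : n+1 < k),
          Nat.choose_eq_zero_of_lt (by omega : n+2 < k),
          Nat.choose_eq_zero_of_lt (by omega : n+2 < k+1)]
      push_cast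
      ring


lemma T_ext (a : ℝ) (n N : ℕ) (h : n+1 ≤ N) :
    T a n = ∑ k ∈ Finset.range N, (n.choose k : ℝ) * ((n+k).choose k : ℝ) * a^k := by
  apply Finset.sum_subset (Finset.range_subset_range.mpr h)
  intro k hk hk'
  rw [Nat.choose_eq_zero_of_lt (by simp at hk' ⊢; omega)]
  simp

lemma rec_T (a : ℝ) (n : ℕ) :
    ((n:ℝ)+1) * T a n - (2*(n:ℝ)+3)*(2*a+1) * T a (n+1) + ((n:ℝ)+2) * T a (n+2) = 0 := by
  have hne : ((n:ℝ)+1)*((n:ℝ)+2) ≠ 0 := by positivity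
  suffices h : ((n:ℝ)+1)*((n:ℝ)+2) * (((n:ℝ)+1) * T a n
      - (2*(n:ℝ)+3)*(2*a+1) * T a (n+1) + ((n:ℝ)+2) * T a (n+2)) = 0 by
    exact (mul_eq_zero.mp h).resolve_left hne
  have expand : ((n:ℝ)+1)*((n:ℝ)+2) * (((n:ℝ)+1) * T a n
      - (2*(n:ℝ)+3)*(2*a+1) * T a (n+1) + ((n:ℝ)+2) * T a (n+2))
      = ∑ k ∈ Finset.range (n+3),
        ((n:ℝ)+1)*((n:ℝ)+2)*(((n:ℝ)+1)*(n.choose k : ℝ)*((n+k).choose k : ℝ)*a^k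
        - (2*(n:ℝ)+3)*(2*a+1)*((n+1).choose k : ℝ)*((n+1+k).choose k : ℝ)*a^k
        + ((n:ℝ)+2)*((n+2).choose k : ℝ)*((n+2+k).choose k : ℝ)*a^k) := by
    rw [T_ext a n (n+3) (by omega), T_ext a (n+1) (n+3) (by omega),
        T_ext a (n+2) (n+3) (by omega), Finset.mul_sum, Finset.mul_sum, Finset.mul_sum,
        ← Finset.sum_sub_distrib, ← Finset.sum_add_distrib, Finset.mul_sum]
    exact Finset.sum_congr rfl fun k _ => by ring
  rw [expand, Finset.sum_congr rfl fun k _ => key a n k, ← Finset.mul_sum,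
      Finset.sum_range_sub' (f := fun k => ((k:ℕ):ℝ)^2*((n+2).choose k : ℝ)*((n+k).choose k : ℝ)*a^k)]
  rw [Nat.choose_eq_zero_of_lt (show n+2 < n+3 by omega)]
  simp

lemma prod_neg (x : ℝ) (n : ℕ) : ∀ k : ℕ,
    ∏ j ∈ Finset.range k, (-(n : ℝ) - 1 - j) = (-1)^k * ((n+k)! : ℝ) / (n ! : ℝ)
  | 0 => by
    have h : ((n !:ℝ)) ≠ 0 := by positivity
    simp [div_self h]
  | (k+1) => by
    rw [Finset.prod_range_succ, prod_neg x n k, show n+(k+1) = (n+k)+1 from rfl,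
      Nat.factorial_succ]
    have : ((n !:ℝ)) ≠ 0 := by positivity
    push_cast
    field_simp
    ring

lemma S1_form (x : ℝ) (n : ℕ) :
    (∑ k ∈ Finset.range (n + 1),
      (n.choose k : ℝ) * ((∏ j ∈ Finset.range k, (-(n : ℝ) - 1 - j)) / k !) * ((1 - x) / 2) ^ k)
    = T ((x-1)/2) n := by
  unfold T
  refine Finset.sum_congr rfl fun k hk => ?_
  have hmm : ((1-x)/2:ℝ)^k = (-1:ℝ)^k * ((x-1)/2)^k := by
    rw [← mul_pow]; congr 1; ring
  rw [prod_neg x n k, Nat.cast_choose ℝ (show k ≤ n+k by omega),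
    show n+k-k = n from by omega, hmm]
  have hm : ((-1:ℝ))^k * ((-1:ℝ))^k = 1 := by rw [← mul_pow]; norm_num
  linear_combination ((n.choose k:ℝ) * ((n+k)! : ℝ) / (n ! : ℝ) / (k ! : ℝ) * ((x-1)/2)^k) * hm

lemma TS2 (a : ℝ) (n : ℕ) :
    T a n = ∑ k ∈ Finset.range (n+1), (n.choose k : ℝ)^2 * a^(n-k) * (a+1)^k := by
  have hL : T a n = ∑ m ∈ Finset.range (n+1), ∑ r ∈ Finset.range (m+1),
      (n.choose r : ℝ)^2 * ((n-r).choose (m-r) : ℝ) * a^m := by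
    unfold T
    refine Finset.sum_congr rfl fun m hm => ?_
    have hmn : m ≤ n := by simp at hm; omega
    rw [Nat.add_choose_eq, Finset.Nat.sum_antidiagonal_eq_sum_range_succ_mk]
    push_cast
    rw [Finset.mul_sum, Finset.sum_mul]
    refine Finset.sum_congr rfl fun r hr => ?_
    have hrm : r ≤ m := by simp at hr; omega
    rw [Nat.choose_symm hrm]
    have hcm : ((n.choose m : ℝ)) * (m.choose r : ℝ) = (n.choose r : ℝ) * ((n-r).choose (m-r) : ℝ) := by
      exact_mod_cast congrArg (Nat.cast (R := ℝ)) (Nat.choose_mul (n := n) hrm)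
    linear_combination ((n.choose r : ℝ)) * a^m * hcm
  have hR : (∑ k ∈ Finset.range (n+1), (n.choose k : ℝ)^2 * a^(n-k) * (a+1)^k)
      = ∑ k ∈ Finset.range (n+1), ∑ j ∈ Finset.range (k+1),
        (n.choose k : ℝ)^2 * (k.choose j : ℝ) * a^(n-k+j) := by
    refine Finset.sum_congr rfl fun k hk => ?_
    rw [add_pow]
    rw [Finset.mul_sum]
    refine Finset.sum_congr rfl fun j hj => ?_
    rw [pow_add]
    ring
  rw [hL, hR, Finset.sum_sigma', Finset.sum_sigma']
  refine Finset.sum_nbij' (fun p => ⟨n - p.2, p.1 - p.2⟩) (fun p => ⟨n - p.1 + p.2, n - p.1⟩)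
    ?_ ?_ ?_ ?_ ?_
  · rintro ⟨m, r⟩ hp
    simp only [Finset.mem_sigma, Finset.mem_range] at hp ⊢
    omega
  · rintro ⟨k, j⟩ hp
    simp only [Finset.mem_sigma, Finset.mem_range] at hp ⊢
    omega
  · rintro ⟨m, r⟩ hp
    simp only [Finset.mem_sigma, Finset.mem_range] at hp
    simp only [Sigma.mk.inj_iff]
    constructor <;> [omega; (rw [heq_iff_eq]; omega)]
  · rintro ⟨k, j⟩ hp
    simp only [Finset.mem_sigma, Finset.mem_range] at hp
    simp only [Sigma.mk.inj_iff]
    constructor <;> [omega; (rw [heq_iff_eq]; omega)]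
  · rintro ⟨m, r⟩ hp
    simp only [Finset.mem_sigma, Finset.mem_range] at hp
    have hrn : r ≤ n := by omega
    simp only
    rw [show n-(n-r)+(m-r) = m from by omega, Nat.choose_symm hrn]

lemma S2_form (x : ℝ) (n : ℕ) :
    (2 : ℝ) ^ (-(n : ℤ)) * ∑ k ∈ Finset.range (n + 1),
      (n.choose k : ℝ) ^ 2 * (x - 1) ^ (n - k) * (x + 1) ^ k
    = ∑ k ∈ Finset.range (n+1), (n.choose k : ℝ)^2 * ((x-1)/2)^(n-k) * ((x-1)/2+1)^k := by
  rw [zpow_neg, zpow_natCast, Finset.mul_sum]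
  refine Finset.sum_congr rfl fun k hk => ?_
  have hkn : k ≤ n := by simp at hk; omega
  have h2 : (2:ℝ)^(n-k) * 2^k = 2^n := by rw [← pow_add]; congr 1; omega
  have hne : (2:ℝ)^n ≠ 0 := by positivity
  rw [show ((x-1)/2+1 : ℝ) = (x+1)/2 from by ring]
  have key2 : ((x-1)/2:ℝ)^(n-k) * ((x+1)/2)^k = ((2:ℝ)^n)⁻¹ * ((x-1)^(n-k)*(x+1)^k) := by
    rw [div_pow, div_pow, ← h2]
    have a1 : ((2:ℝ))^(n-k) ≠ 0 := by positivity
    have a2 : ((2:ℝ))^k ≠ 0 := by positivity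
    field_simp
  linear_combination ((n.choose k:ℝ)^2) * key2.symm

theorem stmt_14 (x : ℝ) (S₁ S₂ : ℕ → ℝ)
    (hS₁ : ∀ n : ℕ, S₁ n = ∑ k ∈ Finset.range (n + 1),
      (n.choose k : ℝ) * ((∏ j ∈ Finset.range k, (-(n : ℝ) - 1 - j)) / k !) * ((1 - x) / 2) ^ k)
    (hS₂ : ∀ n : ℕ, S₂ n = (2 : ℝ) ^ (-(n : ℤ)) * ∑ k ∈ Finset.range (n + 1),
      (n.choose k : ℝ) ^ 2 * (x - 1) ^ (n - k) * (x + 1) ^ k) :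
    (∀ n : ℕ, ((n : ℝ) + 1) * S₁ n - (2 * n + 3) * x * S₁ (n + 1) + ((n : ℝ) + 2) * S₁ (n + 2) = 0)
    ∧ (∀ n : ℕ, ((n : ℝ) + 1) * S₂ n - (2 * n + 3) * x * S₂ (n + 1) + ((n : ℝ) + 2) * S₂ (n + 2) = 0)
    ∧ S₁ 0 = S₂ 0 ∧ S₁ 1 = S₂ 1 ∧ ∀ n : ℕ, S₁ n = S₂ n := by
  have e1 : ∀ n, S₁ n = T ((x-1)/2) n := fun n => (hS₁ n).trans (S1_form x n)
  have e2 : ∀ n, S₂ n = T ((x-1)/2) n := fun n => by rw [hS₂ n, S2_form x n, ← TS2]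
  have heq : ∀ n, S₁ n = S₂ n := fun n => (e1 n).trans (e2 n).symm
  have hrec : ∀ n : ℕ, ((n : ℝ) + 1) * S₁ n - (2 * n + 3) * x * S₁ (n + 1)
      + ((n : ℝ) + 2) * S₁ (n + 2) = 0 := by
    intro n
    rw [e1, e1, e1]
    linear_combination rec_T ((x-1)/2) n
  exact ⟨hrec, fun n => by rw [← heq, ← heq, ← heq]; exact hrec n, heq 0, heq 1, heq⟩
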